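/- Under the hypotheses of Theorem 2 (task T over prefixes with latent posterior u(·|s), verifier p(·|s), drafter q(·|s) on a finite vocabulary V; α_T := E_{s∼T}[Σ_x min(p(x|s), q(x|s))]; r_p := E_{s∼T}[TV(u,p)]; r_q := E_{s∼T}[TV(u,q)]), the task-wise acceptance is sandwiched as 1 − (r_q + r_p) ≤ α_T ≤ 1 − (r_q − r_p). -/

import Mathlib

open MeasureTheory

/-- Under the hypotheses of Theorem 2, the task-wise acceptance
`α_T := E_{s∼T}[∑ x, min (p s x) (q s x)]` is sandwiched between
`1 - (r_q + r_p)` and `1 - (r_q - r_p)`, where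
`r_p := E_{s∼T}[TV(u(·|s), p(·|s))]` and `r_q := E_{s∼T}[TV(u(·|s), q(·|s))]`. -/
theorem acceptance_sandwich {Ω : Type*} [MeasurableSpace Ω]
    (T : Measure Ω) [IsProbabilityMeasure T]
    {V : Type*} [Fintype V]
    (u p q : Ω → V → ℝ)
    (hu0 : ∀ s x, 0 ≤ u s x) (hp0 : ∀ s x, 0 ≤ p s x) (hq0 : ∀ s x, 0 ≤ q s x)
    (hu1 : ∀ s, ∑ x, u s x = 1) (hp1 : ∀ s, ∑ x, p s x = 1) (hq1 : ∀ s, ∑ x, q s x = 1)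
    (hintα : Integrable (fun s => ∑ x, min (p s x) (q s x)) T)
    (hintp : Integrable (fun s => (1 / 2) * ∑ x, |u s x - p s x|) T)
    (hintq : Integrable (fun s => (1 / 2) * ∑ x, |u s x - q s x|) T)
    (r_p r_q α_T : ℝ)
    (hrp : r_p = ∫ s, (1 / 2) * ∑ x, |u s x - p s x| ∂T)
    (hrq : r_q = ∫ s, (1 / 2) * ∑ x, |u s x - q s x| ∂T)
    (hαT : α_T = ∫ s, ∑ x, min (p s x) (q s x) ∂T) :
    1 - (r_q + r_p) ≤ α_T ∧ α_T ≤ 1 - (r_q - r_p) := by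
  -- pointwise identity: ∑ min = 1 - (1/2) ∑ |p - q|
  have key : ∀ s, ∑ x, min (p s x) (q s x)
      = 1 - (1 / 2) * ∑ x, |p s x - q s x| := by
    intro s
    have hmin : ∀ x, min (p s x) (q s x)
        = (p s x + q s x - |p s x - q s x|) / 2 := by
      intro x
      rcases le_total (p s x) (q s x) with h | h
      · rw [min_eq_left h, abs_of_nonpos (by linarith)]; ring
      · rw [min_eq_right h, abs_of_nonneg (by linarith)]; ring
    simp only [hmin]
    rw [← Finset.sum_div, Finset.sum_sub_distrib, Finset.sum_add_distrib,
      hp1 s, hq1 s]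
    ring
  have htri1 : ∀ s, 1 - ((1 / 2) * ∑ x, |u s x - q s x|
      + (1 / 2) * ∑ x, |u s x - p s x|) ≤ ∑ x, min (p s x) (q s x) := by
    intro s
    rw [key s]
    have : ∑ x, |p s x - q s x| ≤ ∑ x, |u s x - p s x| + ∑ x, |u s x - q s x| := by
      rw [← Finset.sum_add_distrib]
      refine Finset.sum_le_sum fun x _ => ?_
      calc |p s x - q s x| = |(p s x - u s x) + (u s x - q s x)| := by ring_nf
        _ ≤ |p s x - u s x| + |u s x - q s x| := abs_add_le _ _
        _ = |u s x - p s x| + |u s x - q s x| := by rw [abs_sub_comm]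
    linarith
  have htri2 : ∀ s, ∑ x, min (p s x) (q s x)
      ≤ 1 - ((1 / 2) * ∑ x, |u s x - q s x| - (1 / 2) * ∑ x, |u s x - p s x|) := by
    intro s
    rw [key s]
    have : ∑ x, |u s x - q s x| ≤ ∑ x, |u s x - p s x| + ∑ x, |p s x - q s x| := by
      rw [← Finset.sum_add_distrib]
      refine Finset.sum_le_sum fun x _ => ?_
      calc |u s x - q s x| = |(u s x - p s x) + (p s x - q s x)| := by ring_nf
        _ ≤ |u s x - p s x| + |p s x - q s x| := abs_add_le _ _
    linarith
  have hT1 : (T Set.univ).toReal = 1 := by simp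
  constructor
  · have hlow : 1 - (r_q + r_p)
        = ∫ s, (1 - ((1 / 2) * ∑ x, |u s x - q s x|
            + (1 / 2) * ∑ x, |u s x - p s x|)) ∂T := by
      have h1 : ∫ s, (1 - ((1 / 2) * ∑ x, |u s x - q s x|
          + (1 / 2) * ∑ x, |u s x - p s x|)) ∂T
          = (∫ _s, (1 : ℝ) ∂T) - ∫ s, ((1 / 2) * ∑ x, |u s x - q s x|
          + (1 / 2) * ∑ x, |u s x - p s x|) ∂T :=
        integral_sub (integrable_const 1) (hintq.add hintp)
      have h2 : ∫ s, ((1 / 2) * ∑ x, |u s x - q s x|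
          + (1 / 2) * ∑ x, |u s x - p s x|) ∂T
          = (∫ s, (1 / 2) * ∑ x, |u s x - q s x| ∂T)
          + ∫ s, (1 / 2) * ∑ x, |u s x - p s x| ∂T := integral_add hintq hintp
      rw [h1, h2, integral_const, (show T.real Set.univ = 1 from hT1), hrp, hrq]
      simp
    rw [hlow, hαT]
    exact integral_mono ((integrable_const 1).sub (hintq.add hintp)) hintα
      fun s => htri1 s
  · have hhigh : 1 - (r_q - r_p)
        = ∫ s, (1 - ((1 / 2) * ∑ x, |u s x - q s x|
            - (1 / 2) * ∑ x, |u s x - p s x|)) ∂T := by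
      have h1 : ∫ s, (1 - ((1 / 2) * ∑ x, |u s x - q s x|
          - (1 / 2) * ∑ x, |u s x - p s x|)) ∂T
          = (∫ _s, (1 : ℝ) ∂T) - ∫ s, ((1 / 2) * ∑ x, |u s x - q s x|
          - (1 / 2) * ∑ x, |u s x - p s x|) ∂T :=
        integral_sub (integrable_const 1) (hintq.sub hintp)
      have h2 : ∫ s, ((1 / 2) * ∑ x, |u s x - q s x|
          - (1 / 2) * ∑ x, |u s x - p s x|) ∂T
          = (∫ s, (1 / 2) * ∑ x, |u s x - q s x| ∂T)
          - ∫ s, (1 / 2) * ∑ x, |u s x - p s x| ∂T := integral_sub hintq hintp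
      rw [h1, h2, integral_const, (show T.real Set.univ = 1 from hT1), hrp, hrq]
      simp
    rw [hhigh, hαT]
    exact integral_mono hintα ((integrable_const 1).sub (hintq.sub hintp))
      fun s => htri2 s
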